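/- Muntyan–Savchuk: let a, b, c be the automorphisms of the rooted binary tree {0,1}* defined recursively by a(0w) = 0·b(w), a(1w) = 1·c(w); b(0w) = 0·c(w), b(1w) = 1·b(w); c(0w) = 1·a(w), c(1w) = 0·a(w). Then the group ⟨a, b, c⟩ ≤ Aut({0,1}*) is isomorphic to the free product ℤ/2 * ℤ/2 * ℤ/2, via the map sending the three free-product generators to a, b, c; in particular a² = b² = c² = 1 and these are the only relations. -/

import Mathlib

/-- States of the automaton `E₁`. -/
inductive EGen | a | b | c
deriving DecidableEq

/-- The three transformations of `{0,1}*` (with `false = 0`, `true = 1`) computed by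
the states of the automaton `E₁`, defined by the mutual recursion
`a(0w) = 0·b(w), a(1w) = 1·c(w); b(0w) = 0·c(w), b(1w) = 1·b(w);
c(0w) = 1·a(w), c(1w) = 0·a(w)`. -/
def eAut : EGen → List Bool → List Bool
  | _, [] => []
  | .a, false :: w => false :: eAut .b w
  | .a, true :: w => true :: eAut .c w
  | .b, false :: w => false :: eAut .c w
  | .b, true :: w => true :: eAut .b w
  | .c, x :: w => (!x) :: eAut .a w

/-- The relators `x², y², z²` of the free product `ℤ/2 * ℤ/2 * ℤ/2 = ⟨x,y,z ∣ x²,y²,z²⟩`. -/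
def freeProdRels : Set (FreeGroup (Fin 3)) :=
  Set.range fun i : Fin 3 => (FreeGroup.of i) ^ 2

instance : Fintype EGen := ⟨{EGen.a, EGen.b, EGen.c}, fun x => by cases x <;> simp⟩

namespace E1

/-- root activity of a single state -/
def rhoL : EGen → Bool → Bool
  | .c, x => !x
  | _, x => x

/-- section (next state) of a single state at a vertex -/
def sect : EGen → Bool → EGen
  | .a, false => .b
  | .a, true => .c
  | .b, false => .c
  | .b, true => .b
  | .c, _ => .a

lemma eAut_cons (g : EGen) (x : Bool) (s : List Bool) :
    eAut g (x :: s) = rhoL g x :: eAut (sect g x) s := by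
  cases g <;> cases x <;> rfl

lemma eAut_nil (g : EGen) : eAut g [] = [] := by cases g <;> rfl

lemma eAut_eAut : ∀ (s : List Bool) (g : EGen), eAut g (eAut g s) = s := by
  intro s
  induction s with
  | nil => intro g; rw [eAut_nil, eAut_nil]
  | cons x t ih =>
    intro g
    rw [eAut_cons, eAut_cons]
    have h1 : rhoL g (rhoL g x) = x := by cases g <;> cases x <;> rfl
    have h2 : sect g (rhoL g x) = sect g x := by cases g <;> cases x <;> rfl
    rw [h1, h2, ih]

/-- action of a word (leftmost acts last) -/
def ev (w : List EGen) (s : List Bool) : List Bool := w.foldr eAut s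

@[simp] lemma ev_nil (s : List Bool) : ev [] s = s := rfl
@[simp] lemma ev_cons (g : EGen) (w : List EGen) (s : List Bool) :
    ev (g :: w) s = eAut g (ev w s) := rfl

lemma ev_nil_str : ∀ w : List EGen, ev w [] = [] := by
  intro w; induction w with
  | nil => rfl
  | cons g t ih => rw [ev_cons, ih, eAut_nil]

/-- root activity of a word -/
def rho (w : List EGen) (x : Bool) : Bool := w.foldr rhoL x

@[simp] lemma rho_nil (x : Bool) : rho [] x = x := rfl
@[simp] lemma rho_cons (g : EGen) (t : List EGen) (x : Bool) :
    rho (g :: t) x = rhoL g (rho t x) := rfl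

/-- section of a word at a vertex -/
def dsec (x : Bool) : List EGen → List EGen
  | [] => []
  | g :: t => sect g (rho t x) :: dsec x t

@[simp] lemma dsec_nil (x : Bool) : dsec x [] = [] := rfl
@[simp] lemma dsec_cons (x : Bool) (g : EGen) (t : List EGen) :
    dsec x (g :: t) = sect g (rho t x) :: dsec x t := rfl

lemma ev_cons_bool (w : List EGen) (x : Bool) (s : List Bool) :
    ev w (x :: s) = rho w x :: ev (dsec x w) s := by
  induction w with
  | nil => rfl
  | cons g t ih =>
    rw [ev_cons, ih, eAut_cons, dsec_cons, ev_cons, rho_cons]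

/-- parity of the number of c's -/
def parc : List EGen → Bool
  | [] => false
  | .c :: t => !(parc t)
  | _ :: t => parc t

lemma rhoL_eq (g : EGen) (x : Bool) : rhoL g x = xor (g = .c : Bool) x := by
  cases g <;> cases x <;> rfl

lemma rho_parc (w : List EGen) (x : Bool) : rho w x = xor (parc w) x := by
  induction w with
  | nil => simp [parc]
  | cons g t ih =>
    rw [rho_cons, ih, rhoL_eq]
    cases g <;> simp [parc] <;> cases parc t <;> cases x <;> rfl

lemma dsec_length (x : Bool) : ∀ w : List EGen, (dsec x w).length = w.length := by
  intro w; induction w with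
  | nil => rfl
  | cons g t ih => simp [ih]

/-- alternating words -/
def Alt (w : List EGen) : Prop := List.Chain' (· ≠ ·) w

lemma sect_ne : ∀ (g h : EGen) (z : Bool), g ≠ h → sect g (rhoL h z) ≠ sect h z := by decide

lemma dsec_alt (x : Bool) : ∀ (w : List EGen), Alt w → Alt (dsec x w) := by
  intro w
  induction w with
  | nil => intro _; exact List.isChain_nil
  | cons g t ih =>
    intro h
    cases t with
    | nil => exact List.isChain_singleton _
    | cons h' t' =>
      rw [Alt, List.Chain', dsec_cons, dsec_cons, List.isChain_cons_cons]
      obtain ⟨hgh, htail⟩ := List.isChain_cons_cons.mp h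
      refine ⟨?_, ?_⟩
      · rw [rho_cons]; exact sect_ne g h' (rho t' x) hgh
      · have := ih htail
        rw [Alt, dsec_cons] at this
        exact this

end E1

namespace E1

/-! ### dual moves -/

def applyMoves : List Bool → List EGen → List EGen
  | [], w => w
  | x :: u, w => applyMoves u (dsec x w)

@[simp] lemma applyMoves_nil_moves (w : List EGen) : applyMoves [] w = w := rfl
@[simp] lemma applyMoves_cons_moves (x : Bool) (u : List Bool) (w : List EGen) :
    applyMoves (x :: u) w = applyMoves u (dsec x w) := rfl

lemma applyMoves_append (u v : List Bool) (w : List EGen) :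
    applyMoves (u ++ v) w = applyMoves v (applyMoves u w) := by
  induction u generalizing w with
  | nil => rfl
  | cons x u ih => simp [ih]

lemma applyMoves_alt (u : List Bool) (w : List EGen) (h : Alt w) : Alt (applyMoves u w) := by
  induction u generalizing w with
  | nil => exact h
  | cons x u ih => exact ih _ (dsec_alt x w h)

lemma applyMoves_length (u : List Bool) (w : List EGen) :
    (applyMoves u w).length = w.length := by
  induction u generalizing w with
  | nil => rfl
  | cons x u ih => rw [applyMoves_cons_moves, ih, dsec_length]

lemma applyMoves_nil_word (u : List Bool) : applyMoves u [] = [] := by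
  induction u with
  | nil => rfl
  | cons x u ih => simpa using ih

/-- Reachability by dual moves -/
def Reach (v w : List EGen) : Prop := ∃ u : List Bool, applyMoves u v = w

lemma Reach.refl (v : List EGen) : Reach v v := ⟨[], rfl⟩

lemma Reach.trans {v w z : List EGen} : Reach v w → Reach w z → Reach v z := by
  rintro ⟨u1, h1⟩ ⟨u2, h2⟩
  exact ⟨u1 ++ u2, by rw [applyMoves_append, h1, h2]⟩

/-! ### the lift of moves to words extended on the right -/

def mv : Bool → EGen → EGen
  | false, .a => .b
  | false, .b => .c
  | false, .c => .a
  | true, .a => .c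
  | true, .b => .b
  | true, .c => .a

def xof : Bool → EGen → Bool
  | y, .c => !y
  | y, _ => y

def mw : List Bool → EGen → EGen
  | [], g => g
  | y :: u, g => mw u (mv y g)

lemma rho_append (v : List EGen) (g : EGen) (x : Bool) :
    rho (v ++ [g]) x = rho v (rhoL g x) := by
  induction v with
  | nil => rfl
  | cons h t ih => simp [ih]

lemma dsec_append (x : Bool) (v : List EGen) (g : EGen) :
    dsec x (v ++ [g]) = dsec (rhoL g x) v ++ [sect g x] := by
  induction v with
  | nil => rfl
  | cons h t ih =>
    simp only [List.cons_append, dsec_cons, ih, rho_append]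

lemma lift1 (y : Bool) (g : EGen) (v : List EGen) :
    dsec (xof y g) (v ++ [g]) = dsec y v ++ [mv y g] := by
  have h1 : rhoL g (xof y g) = y := by cases g <;> cases y <;> rfl
  have h2 : sect g (xof y g) = mv y g := by cases g <;> cases y <;> rfl
  rw [dsec_append, h1, h2]

lemma liftReach (u : List Bool) (v : List EGen) (g : EGen) :
    ∃ u' : List Bool, applyMoves u' (v ++ [g]) = applyMoves u v ++ [mw u g] := by
  induction u generalizing v g with
  | nil => exact ⟨[], rfl⟩
  | cons y u ih =>
    obtain ⟨u'', h⟩ := ih (dsec y v) (mv y g)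
    exact ⟨xof y g :: u'', by rw [applyMoves_cons_moves, lift1, h]; rfl⟩

lemma mv_inj (y : Bool) : Function.Injective (mv y) := by
  intro g g'; cases y <;> cases g <;> cases g' <;> simp [mv] <;> intro h <;> exact h

lemma mw_inj (u : List Bool) : Function.Injective (mw u) := by
  induction u with
  | nil => exact fun _ _ h => h
  | cons y u ih => exact fun g g' h => mv_inj y (ih h)

/-! ### run/out machinery for iterated sections -/

def stepState : EGen → List Bool → List Bool
  | _, [] => []
  | g, v :: vs => rhoL g v :: stepState (sect g v) vs

def out : EGen → List Bool → EGen
  | g, [] => g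
  | g, v :: vs => out (sect g v) vs

def runs : List EGen → List Bool → List Bool
  | _, [] => []
  | t, x :: xs => rho t x :: runs (dsec x t) xs

lemma runs_cons (g : EGen) (t : List EGen) (xs : List Bool) :
    runs (g :: t) xs = stepState g (runs t xs) := by
  induction xs generalizing g t with
  | nil => rfl
  | cons x xs ih =>
    show rho (g :: t) x :: runs (dsec x (g :: t)) xs = _
    rw [rho_cons, dsec_cons, ih]
    rfl

lemma applyMoves_cons_letter (xs : List Bool) (g : EGen) (t : List EGen) :
    applyMoves xs (g :: t) = out g (runs t xs) :: applyMoves xs t := by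
  induction xs generalizing g t with
  | nil => rfl
  | cons x xs ih =>
    show applyMoves xs (dsec x (g :: t)) = _
    rw [dsec_cons, ih]
    rfl

lemma runs_nil_word (xs : List Bool) : runs [] xs = xs := by
  induction xs with
  | nil => rfl
  | cons x xs ih =>
    show rho [] x :: runs (dsec x []) xs = x :: xs
    rw [rho_nil, dsec_nil, ih]

/-! ### the fixed family vstar and the move word U -/

def U : List Bool := [false, true, false, true, true]

def xi (k : ℕ) : EGen :=
  if k < 4 then [EGen.b, EGen.c, EGen.a, EGen.c].getD k EGen.a
  else [EGen.b, EGen.a, EGen.c, EGen.a, EGen.c].getD ((k - 4) % 5) EGen.a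

def Sf (n : ℕ) : List Bool :=
  if n = 0 then [false, true, false, true, true]
  else [[false,false,false,true,true],[true,false,false,false,true],[true,true,false,false,false],
        [false,true,true,false,false],[false,false,true,true,false]].getD ((n - 1) % 5) []

lemma xi_per (k : ℕ) (hk : 4 ≤ k) : xi (k + 5) = xi k := by
  rw [xi, xi, if_neg (by omega), if_neg (by omega)]
  have h : k + 5 - 4 = (k - 4) + 5 := by omega
  rw [h, Nat.add_mod_right]

lemma Sf_per (n : ℕ) (hn : 1 ≤ n) : Sf (n + 5) = Sf n := by
  rw [Sf, Sf, if_neg (by omega), if_neg (by omega)]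
  have h : n + 5 - 1 = (n - 1) + 5 := by omega
  rw [h, Nat.add_mod_right]

lemma Pn : ∀ n : ℕ, stepState (xi n) (Sf n) = Sf (n + 1) ∧ out (xi n) (Sf n) = xi n := by
  intro n
  induction n using Nat.strong_induction_on with
  | _ n ih =>
    by_cases h : n < 9
    · interval_cases n <;> exact (by decide)
    · have h5 : n = (n - 5) + 5 := by omega
      have h4 : 4 ≤ n - 5 := by omega
      have h1 : 1 ≤ n - 5 := by omega
      rw [h5, xi_per _ h4, Sf_per _ h1]
      have h6 : n - 5 + 5 + 1 = (n - 5 + 1) + 5 := by omega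
      rw [h6, Sf_per _ (by omega)]
      exact ih (n - 5) (by omega)

lemma xi_ne : ∀ n : ℕ, xi (n + 1) ≠ xi n := by
  intro n
  induction n using Nat.strong_induction_on with
  | _ n ih =>
    by_cases h : n < 9
    · interval_cases n <;> exact (by decide)
    · have h5 : n = (n - 5) + 5 := by omega
      rw [h5]
      have h6 : n - 5 + 5 + 1 = (n - 5 + 1) + 5 := by omega
      rw [h6, xi_per _ (by omega), xi_per _ (by omega)]
      exact ih (n - 5) (by omega)

def vstar : ℕ → List EGen
  | 0 => []
  | n + 1 => xi n :: vstar n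

lemma vstar_length (n : ℕ) : (vstar n).length = n := by
  induction n with
  | zero => rfl
  | succ n ih => simp [vstar, ih]

lemma vstar_alt : ∀ n, Alt (vstar n)
  | 0 => List.isChain_nil
  | 1 => List.isChain_singleton _
  | (n + 2) => by
    have ih := vstar_alt (n + 1)
    show List.Chain' _ (xi (n+1) :: xi n :: vstar n)
    exact List.isChain_cons_cons.mpr ⟨xi_ne n, ih⟩

lemma vstar_getLast (n : ℕ) : (vstar (n + 1)).getLast? = some EGen.b := by
  induction n with
  | zero => rfl
  | succ n ih =>
    show (xi (n+1) :: vstar (n+1)).getLast? = _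
    rw [show vstar (n+1) = xi n :: vstar n from rfl] at ih ⊢
    rw [List.getLast?_cons_cons]
    exact ih

lemma runs_vstar (n : ℕ) : runs (vstar n) U = Sf n := by
  induction n with
  | zero => exact runs_nil_word U
  | succ n ih =>
    show runs (xi n :: vstar n) U = _
    rw [runs_cons, ih, (Pn n).1]

lemma vstar_fixed (n : ℕ) : applyMoves U (vstar n) = vstar n := by
  induction n with
  | zero => exact applyMoves_nil_word U
  | succ n ih =>
    show applyMoves U (xi n :: vstar n) = _
    rw [applyMoves_cons_letter, runs_vstar, (Pn n).2, ih]
    rfl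

lemma mwU_ne (g : EGen) (h : g ≠ .b) : mw U g ≠ g := by
  revert h; cases g <;> decide

end E1

namespace E1

lemma pigeon3 : ∀ (L A B h : EGen), A ≠ B → A ≠ L → B ≠ L → h ≠ L → h = A ∨ h = B := by decide

lemma singleton_reach : ∀ g h : EGen, Reach [g] [h] := by
  intro g h
  cases g <;> cases h
  · exact ⟨[], rfl⟩
  · exact ⟨[false], rfl⟩
  · exact ⟨[false, false], rfl⟩
  · exact ⟨[false, false], rfl⟩
  · exact ⟨[], rfl⟩
  · exact ⟨[false], rfl⟩
  · exact ⟨[false], rfl⟩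
  · exact ⟨[false, false], rfl⟩
  · exact ⟨[], rfl⟩

/-- getLast? of a nonempty alternating extension: the appended letter differs from the last. -/
lemma alt_append_ne {q : List EGen} {g L : EGen} (h : Alt (q ++ [g]))
    (hL : q.getLast? = some L) : g ≠ L := by
  obtain ⟨-, -, h3⟩ := List.isChain_append.mp h
  exact fun hgl => (h3 L hL g rfl) (hgl ▸ rfl)

theorem trans_reach : ∀ n, ∀ v w : List EGen, Alt v → Alt w →
    v.length = n → w.length = n → Reach v w
  | 0, v, w, _, _, hv, hw => by
    rw [List.length_eq_zero_iff] at hv hw; rw [hv, hw]; exact Reach.refl _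
  | 1, v, w, _, _, hv, hw => by
    obtain ⟨g, rfl⟩ := List.length_eq_one_iff.mp hv
    obtain ⟨h, rfl⟩ := List.length_eq_one_iff.mp hw
    exact singleton_reach g h
  | (n + 2), v, w, hav, haw, hv, hw => by
    -- decompose both words
    rcases List.eq_nil_or_concat v with rfl | ⟨p, g, rfl⟩
    · simp at hv
    rcases List.eq_nil_or_concat w with rfl | ⟨q, h, rfl⟩
    · simp at hw
    simp only [List.concat_eq_append] at hv hw hav haw ⊢
    have hp : p.length = n + 1 := by simpa using hv
    have hq : q.length = n + 1 := by simpa using hw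
    obtain ⟨hap, -, -⟩ := List.isChain_append.mp hav
    obtain ⟨haq, -, -⟩ := List.isChain_append.mp haw
    have hvn : (vstar (n + 1)).length = n + 1 := vstar_length _
    have havn := vstar_alt (n + 1)
    -- step 1 : p ++ [g] → q ++ [g₁]
    obtain ⟨u₁, hu₁⟩ := trans_reach (n + 1) p q hap haq hp hq
    obtain ⟨u₁', hu₁'⟩ := liftReach u₁ p g
    rw [hu₁] at hu₁'
    set g₁ := mw u₁ g with hg₁
    -- step 2 : q ++ [g₁] → vstar ++ [g₂]
    obtain ⟨u₂, hu₂⟩ := trans_reach (n + 1) q (vstar (n + 1)) haq havn hq hvn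
    obtain ⟨u₂', hu₂'⟩ := liftReach u₂ q g₁
    rw [hu₂] at hu₂'
    set g₂ := mw u₂ g₁ with hg₂
    -- step 3 : vstar ++ [g₂] → vstar ++ [mw U g₂]
    obtain ⟨uU', hU'⟩ := liftReach U (vstar (n + 1)) g₂
    rw [vstar_fixed] at hU'
    -- step 4 : vstar ++ [·] → q ++ [mw u₃ ·]
    obtain ⟨u₃, hu₃⟩ := trans_reach (n + 1) (vstar (n + 1)) q havn haq hvn hq
    obtain ⟨u₃a, h₃a⟩ := liftReach u₃ (vstar (n + 1)) g₂
    obtain ⟨u₃b, h₃b⟩ := liftReach u₃ (vstar (n + 1)) (mw U g₂)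
    rw [hu₃] at h₃a h₃b
    -- reach facts
    have R1 : Reach (p ++ [g]) (q ++ [g₁]) := ⟨u₁', hu₁'⟩
    have R2 : Reach (q ++ [g₁]) (vstar (n + 1) ++ [g₂]) := ⟨u₂', hu₂'⟩
    have RU : Reach (vstar (n + 1) ++ [g₂]) (vstar (n + 1) ++ [mw U g₂]) := ⟨uU', hU'⟩
    have RA : Reach (vstar (n + 1) ++ [g₂]) (q ++ [mw u₃ g₂]) := ⟨u₃a, h₃a⟩
    have RB : Reach (vstar (n + 1) ++ [mw U g₂]) (q ++ [mw u₃ (mw U g₂)]) := ⟨u₃b, h₃b⟩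
    have RvA : Reach (p ++ [g]) (q ++ [mw u₃ g₂]) := (R1.trans R2).trans RA
    have RvB : Reach (p ++ [g]) (q ++ [mw u₃ (mw U g₂)]) := ((R1.trans R2).trans RU).trans RB
    -- alternation of reached words
    have altReach : ∀ {z : List EGen}, Reach (p ++ [g]) z → Alt z := by
      rintro z ⟨u, rfl⟩; exact applyMoves_alt u _ hav
    -- q nonempty, last letter
    obtain ⟨Lq, hLq⟩ : ∃ L, q.getLast? = some L := by
      cases q with
      | nil => simp at hq
      | cons a t => exact ⟨(a :: t).getLast (by simp), List.getLast?_eq_getLast _⟩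
    -- g₂ ≠ b
    have hg₂b : g₂ ≠ EGen.b := by
      have := altReach (R1.trans R2)
      exact alt_append_ne this (vstar_getLast n)
    -- the two candidate letters are distinct
    have hAB : mw u₃ g₂ ≠ mw u₃ (mw U g₂) := fun hEq =>
      (mwU_ne g₂ hg₂b) (mw_inj u₃ hEq).symm
    have hA : mw u₃ g₂ ≠ Lq := alt_append_ne (altReach RvA) hLq
    have hB : mw u₃ (mw U g₂) ≠ Lq := alt_append_ne (altReach RvB) hLq
    have hh : h ≠ Lq := alt_append_ne haw hLq
    rcases pigeon3 Lq (mw u₃ g₂) (mw u₃ (mw U g₂)) h hAB hA hB hh with hcase | hcase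
    · rw [hcase]; exact RvA
    · rw [hcase]; exact RvB

/-! ### target odd word and witness -/

def abl : ℕ → Bool → List EGen
  | 0, _ => []
  | n + 1, fl => (if fl then EGen.a else EGen.b) :: abl n (!fl)

lemma abl_length (n : ℕ) (fl : Bool) : (abl n fl).length = n := by
  induction n generalizing fl with
  | zero => rfl
  | succ n ih => simp [abl, ih]

lemma abl_parc (n : ℕ) (fl : Bool) : parc (abl n fl) = false := by
  induction n generalizing fl with
  | zero => rfl
  | succ n ih => cases fl <;> simp [abl, parc, ih]

lemma abl_alt (n : ℕ) (fl : Bool) : Alt (abl n fl) := by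
  induction n generalizing fl with
  | zero => exact List.isChain_nil
  | succ n ih =>
    rw [Alt, List.Chain', abl, List.isChain_cons]
    refine ⟨?_, ih (!fl)⟩
    intro y hy
    cases n with
    | zero => simp [abl] at hy
    | succ m =>
      rw [abl, List.head?_cons, Option.mem_some_iff] at hy
      subst hy
      cases fl <;> simp

def oddW : ℕ → List EGen
  | 0 => []
  | n + 1 => EGen.c :: abl n true

lemma oddW_length (n : ℕ) : (oddW n).length = n := by
  cases n with
  | zero => rfl
  | succ n => simp [oddW, abl_length]

lemma oddW_parc (n : ℕ) : parc (oddW (n + 1)) = true := by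
  show parc (EGen.c :: abl n true) = true
  rw [show parc (EGen.c :: abl n true) = !(parc (abl n true)) from rfl, abl_parc]
  rfl

lemma oddW_alt (n : ℕ) : Alt (oddW n) := by
  cases n with
  | zero => exact List.isChain_nil
  | succ n =>
    rw [oddW, Alt, List.Chain', List.isChain_cons]
    refine ⟨?_, abl_alt n true⟩
    intro y hy
    cases n with
    | zero => simp [abl] at hy
    | succ m =>
      rw [abl, List.head?_cons, Option.mem_some_iff] at hy
      subst hy; simp

/-! ### witness construction -/

lemma witness : ∀ (u : List Bool) (w : List EGen),
    parc (applyMoves u w) = true → ev w (u ++ [false]) ≠ u ++ [false] := by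
  intro u
  induction u with
  | nil =>
    intro w hw heq
    rw [applyMoves_nil_moves] at hw
    rw [List.nil_append, ev_cons_bool, rho_parc, hw] at heq
    simp at heq
  | cons x u ih =>
    intro w hw heq
    rw [List.cons_append, ev_cons_bool] at heq
    have := (List.cons_eq_cons.mp heq).2
    exact ih (dsec x w) (by rwa [applyMoves_cons_moves] at hw) this

/-- Main combinatorial theorem: every nonempty alternating word acts nontrivially. -/
theorem alt_nontrivial (w : List EGen) (hw : Alt w) (hne : w ≠ []) :
    ∃ s : List Bool, ev w s ≠ s := by
  obtain ⟨n, hn⟩ : ∃ n, w.length = n + 1 := by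
    cases w with
    | nil => exact absurd rfl hne
    | cons a t => exact ⟨t.length, by simp⟩
  obtain ⟨u, hu⟩ := trans_reach (n + 1) w (oddW (n + 1)) hw (oddW_alt _) hn (oddW_length _)
  exact ⟨u ++ [false], witness u w (by rw [hu]; exact oddW_parc n)⟩

end E1

namespace E1

/-! ### the permutations -/

def gperm (g : EGen) : Equiv.Perm (List Bool) :=
  ⟨eAut g, eAut g, fun s => eAut_eAut s g, fun s => eAut_eAut s g⟩

@[simp] lemma gperm_coe (g : EGen) : ⇑(gperm g) = eAut g := rfl

lemma gperm_sq (g : EGen) : gperm g * gperm g = 1 :=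
  Equiv.ext fun s => eAut_eAut s g

/-- generator index to EGen -/
def eg : Fin 3 → EGen := ![EGen.a, EGen.b, EGen.c]

lemma eg_inj : Function.Injective eg := by decide

/-- product of generator perms acts by ev -/
lemma prod_gperm_coe : ∀ L : List EGen, ⇑((L.map gperm).prod) = ev L := by
  intro L
  induction L with
  | nil => funext s; rfl
  | cons g t ih =>
    funext s
    simp only [List.map_cons, List.prod_cons, Equiv.Perm.coe_mul, Function.comp_apply, ih, ev_cons]
    rfl

end E1

namespace E1

abbrev PG := PresentedGroup freeProdRels

lemma of_mul_of (i : Fin 3) :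
    (PresentedGroup.of i : PG) * PresentedGroup.of i = 1 := by
  have h : ((FreeGroup.of i) ^ 2 : FreeGroup (Fin 3)) ∈ freeProdRels := ⟨i, rfl⟩
  have h1 : (QuotientGroup.mk ((FreeGroup.of i) ^ 2) : PG) = 1 := by
    rw [QuotientGroup.eq_one_iff]
    exact Subgroup.subset_normalClosure h
  rw [pow_two] at h1
  exact h1

lemma of_inv (i : Fin 3) : (PresentedGroup.of i : PG)⁻¹ = PresentedGroup.of i :=
  inv_eq_of_mul_eq_one_right (of_mul_of i)

/-! ### normal forms in the presented group -/

def prodR (acc : List (Fin 3)) : PG := (acc.reverse.map PresentedGroup.of).prod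

def push (i : Fin 3) : List (Fin 3) → List (Fin 3)
  | [] => [i]
  | j :: t => if i = j then t else i :: j :: t

lemma push_chain (i : Fin 3) (acc : List (Fin 3)) (h : List.Chain' (· ≠ ·) acc) :
    List.Chain' (· ≠ ·) (push i acc) := by
  cases acc with
  | nil => exact List.isChain_singleton _
  | cons j t =>
    by_cases hij : i = j
    · rw [push, if_pos hij]; exact h.tail
    · rw [push, if_neg hij]; exact List.isChain_cons_cons.mpr ⟨hij, h⟩

lemma push_prod (i : Fin 3) (acc : List (Fin 3)) :
    prodR (push i acc) = prodR acc * PresentedGroup.of i := by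
  cases acc with
  | nil => simp [push, prodR]
  | cons j t =>
    by_cases hij : i = j
    · rw [push, if_pos hij, prodR, prodR]
      subst hij
      simp [mul_assoc, of_mul_of]
    · rw [push, if_neg hij, prodR, prodR]
      simp [mul_assoc]

lemma fold_push (L : List (Fin 3)) : ∀ acc : List (Fin 3), List.Chain' (· ≠ ·) acc →
    List.Chain' (· ≠ ·) (L.foldl (fun a i => push i a) acc) ∧
      prodR (L.foldl (fun a i => push i a) acc) = prodR acc * (L.map PresentedGroup.of).prod := by
  induction L with
  | nil => intro acc h; exact ⟨h, by simp⟩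
  | cons i t ih =>
    intro acc h
    obtain ⟨h1, h2⟩ := ih (push i acc) (push_chain i acc h)
    refine ⟨h1, ?_⟩
    simp only [List.foldl_cons] at h2 ⊢
    rw [h2, push_prod, List.map_cons, List.prod_cons, mul_assoc]

lemma exists_nf (x : PG) : ∃ acc : List (Fin 3), List.Chain' (· ≠ ·) acc ∧ x = prodR acc := by
  obtain ⟨z, rfl⟩ := QuotientGroup.mk_surjective x
  induction z using FreeGroup.induction_on with
  | C1 => exact ⟨[], List.isChain_nil, by simp [prodR]; rfl⟩
  | of i => exact ⟨[i], List.isChain_singleton _, by simp [prodR]; rfl⟩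
  | inv_of i _ =>
    refine ⟨[i], List.isChain_singleton _, ?_⟩
    have : (QuotientGroup.mk (FreeGroup.of i : FreeGroup (Fin 3))⁻¹ : PG) = (PresentedGroup.of i : PG)⁻¹ := rfl
    rw [this, of_inv]
    simp [prodR]
  | mul x y hx hy =>
    obtain ⟨ax, hax, hx'⟩ := hx
    obtain ⟨ay, hay, hy'⟩ := hy
    have hmul : (QuotientGroup.mk (x * y) : PG) = QuotientGroup.mk x * QuotientGroup.mk y := rfl
    obtain ⟨h1, h2⟩ := fold_push ay.reverse ax hax
    refine ⟨_, h1, ?_⟩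
    rw [hmul, hx', hy', h2]
    rfl

end E1

namespace E1

def K : Subgroup (Equiv.Perm (List Bool)) :=
  Subgroup.closure {gperm .a, gperm .b, gperm .c}

def fK : Fin 3 → K := fun i =>
  ⟨gperm (eg i), Subgroup.subset_closure (by fin_cases i <;> simp [eg])⟩

lemma fK_sq (i : Fin 3) : fK i * fK i = 1 :=
  Subtype.ext (gperm_sq (eg i))

lemma hrels : ∀ r ∈ freeProdRels, FreeGroup.lift fK r = 1 := by
  rintro r ⟨i, rfl⟩
  rw [map_pow, FreeGroup.lift_apply_of, pow_two, fK_sq]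

def φh : PG →* K := PresentedGroup.toGroup hrels

lemma φh_of (i : Fin 3) : φh (PresentedGroup.of i) = fK i := PresentedGroup.toGroup.of hrels

lemma φh_prod_coe (L : List (Fin 3)) :
    ((φh ((L.map PresentedGroup.of).prod) : K) : Equiv.Perm (List Bool)) =
      ((L.map eg).map gperm).prod := by
  show (K.subtype) (φh ((L.map PresentedGroup.of).prod)) = _
  rw [← MonoidHom.comp_apply, map_list_prod, List.map_map, List.map_map]
  congr 1

lemma φh_inj : Function.Injective φh := by
  rw [injective_iff_map_eq_one]
  intro x hx
  obtain ⟨acc, hch, rfl⟩ := exists_nf x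
  cases hacc : acc.reverse with
  | nil =>
    have : acc = [] := by simpa using congrArg List.reverse hacc
    subst this
    rfl
  | cons j t =>
    exfalso
    have hchL : List.Chain' (· ≠ ·) acc.reverse :=
      List.isChain_reverse.mpr (hch.imp fun a b hab => hab.symm)
    have haltL : Alt (acc.reverse.map eg) :=
      (List.isChain_map eg).mpr (hchL.imp fun a b hab heq => hab (eg_inj heq))
    have hne : acc.reverse.map eg ≠ [] := by rw [hacc]; simp
    obtain ⟨s, hs⟩ := alt_nontrivial (acc.reverse.map eg) haltL hne
    apply hs
    have hcoe : ((φh (prodR acc) : K) : Equiv.Perm (List Bool)) =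
        ((acc.reverse.map eg).map gperm).prod := φh_prod_coe acc.reverse
    rw [hx] at hcoe
    have hone : ((acc.reverse.map eg).map gperm).prod = (1 : Equiv.Perm (List Bool)) := by
      rw [← hcoe]; rfl
    calc ev (acc.reverse.map eg) s
        = (((acc.reverse.map eg).map gperm).prod) s := by rw [prod_gperm_coe]
      _ = (1 : Equiv.Perm (List Bool)) s := by rw [hone]
      _ = s := rfl

lemma φh_surj : Function.Surjective φh := by
  rintro ⟨g, hg⟩
  have main : ∀ (g : Equiv.Perm (List Bool)) (hg : g ∈ K), ∃ x : PG, (φh x : Equiv.Perm (List Bool)) = g := by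
    intro g hg
    refine Subgroup.closure_induction ?_ ?_ ?_ ?_ hg
    · intro x hx
      rcases hx with h | h | h
      · exact ⟨PresentedGroup.of 0, by rw [φh_of]; rw [h]; rfl⟩
      · exact ⟨PresentedGroup.of 1, by rw [φh_of]; rw [h]; rfl⟩
      · exact ⟨PresentedGroup.of 2, by rw [φh_of]; rw [h]; rfl⟩
    · exact ⟨1, by rw [map_one]; rfl⟩
    · rintro x y hx hy ⟨px, hpx⟩ ⟨py, hpy⟩
      exact ⟨px * py, by rw [map_mul]; simp [← hpx, ← hpy]⟩
    · rintro x hx ⟨px, hpx⟩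
      exact ⟨px⁻¹, by rw [map_inv]; simp [← hpx]⟩
  obtain ⟨x, hx⟩ := main g hg
  exact ⟨x, Subtype.ext hx⟩

end E1


/-- Muntyan–Savchuk: the group `⟨a, b, c⟩ ≤ Aut({0,1}*)` generated by the three
states of the automaton `E₁` is isomorphic to the free product
`ℤ/2 * ℤ/2 * ℤ/2 = ⟨x, y, z ∣ x², y², z²⟩`, via the isomorphism sending the three
free-product generators to `a`, `b`, `c` respectively; in particular
`a² = b² = c² = 1` and these are the only relations. -/
theorem e1_group_free_product :
    ∃ pa pb pc : Equiv.Perm (List Bool),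
      ⇑pa = eAut .a ∧ ⇑pb = eAut .b ∧ ⇑pc = eAut .c ∧
      ∃ φ : PresentedGroup freeProdRels ≃*
          (Subgroup.closure {pa, pb, pc} : Subgroup (Equiv.Perm (List Bool))),
        ((φ (PresentedGroup.of 0) : Equiv.Perm (List Bool)) = pa ∧
         (φ (PresentedGroup.of 1) : Equiv.Perm (List Bool)) = pb ∧
         (φ (PresentedGroup.of 2) : Equiv.Perm (List Bool)) = pc) := by
  refine ⟨E1.gperm .a, E1.gperm .b, E1.gperm .c, rfl, rfl, rfl, ?_⟩
  refine ⟨MulEquiv.ofBijective E1.φh ⟨E1.φh_inj, E1.φh_surj⟩, ?_, ?_, ?_⟩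
  · show ((E1.φh (PresentedGroup.of 0) : E1.K) : Equiv.Perm (List Bool)) = _
    rw [E1.φh_of]; rfl
  · show ((E1.φh (PresentedGroup.of 1) : E1.K) : Equiv.Perm (List Bool)) = _
    rw [E1.φh_of]; rfl
  · show ((E1.φh (PresentedGroup.of 2) : E1.K) : Equiv.Perm (List Bool)) = _
    rw [E1.φh_of]; rfl
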